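/- If the Krylov vectors R_ρ^{k}(i[ρ,H]), k = 0,…,n-1, are linearly independent, then the matrix A with entries A_{ij} = T_{i+j-1} is positive definite and the Krylov bound admits the closed form B_n = b^T A^{-1} b, where b_i = T_{i-1}. -/

import Mathlib

open Matrix BigOperators Finset
open scoped Classical

namespace KST

variable {d : ℕ}

/-- Weighted inner product ⟨X,Y⟩_ρ = Re tr(ρ(XY+YX))/2. -/
noncomputable def wip (ρ X Y : Matrix (Fin d) (Fin d) ℂ) : ℝ :=
  (((ρ * (X * Y + Y * X)).trace) / 2).re

/-- Membership in 𝒳: Hermitian with ⟨k|X|l⟩ = 0 whenever p_k = p_l = 0. -/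
def memX (p : Fin d → ℝ) (v : Fin d → (Fin d → ℂ)) (X : Matrix (Fin d) (Fin d) ℂ) : Prop :=
  X.IsHermitian ∧ ∀ k l, p k = 0 → p l = 0 → star (v k) ⬝ᵥ X.mulVec (v l) = 0

/-- The superoperator R_ρ(X) = (ρX + Xρ)/2. -/
noncomputable def Rop (ρ : Matrix (Fin d) (Fin d) ℂ) (X : Matrix (Fin d) (Fin d) ℂ) :
    Matrix (Fin d) (Fin d) ℂ :=
  (1/2 : ℂ) • (ρ * X + X * ρ)

/-- The operator i[ρ,H]. -/
noncomputable def comm (ρ H : Matrix (Fin d) (Fin d) ℂ) : Matrix (Fin d) (Fin d) ℂ :=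
  Complex.I • (ρ * H - H * ρ)

/-- Krylov subspace 𝒦_n = span_ℝ {R_ρ^k(i[ρ,H]) : 0 ≤ k ≤ n-1}. -/
noncomputable def K (ρ H : Matrix (Fin d) (Fin d) ℂ) (n : ℕ) :
    Submodule ℝ (Matrix (Fin d) (Fin d) ℂ) :=
  Submodule.span ℝ ((fun k => (Rop ρ)^[k] (comm ρ H)) '' (Set.Iio n))

/-- Quantum Fisher information (spectral formula). -/
noncomputable def FQ (p : Fin d → ℝ) (v : Fin d → (Fin d → ℂ))
    (H : Matrix (Fin d) (Fin d) ℂ) : ℝ :=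
  2 * ∑ k, ∑ l, if 0 < p k + p l then
    (p k - p l)^2 / (p k + p l) * Complex.normSq (star (v k) ⬝ᵥ H.mulVec (v l)) else 0

/-- T_k = tr(i[ρ,H] R_ρ^k(i[ρ,H])). -/
noncomputable def Tk (ρ H : Matrix (Fin d) (Fin d) ℂ) (k : ℕ) : ℝ :=
  ((comm ρ H * (Rop ρ)^[k] (comm ρ H)).trace).re

/-- P is the orthogonal projection of L onto 𝒦_n w.r.t. ⟨·,·⟩_ρ. -/
def IsProj (ρ H : Matrix (Fin d) (Fin d) ℂ) (n : ℕ)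
    (L P : Matrix (Fin d) (Fin d) ℂ) : Prop :=
  P ∈ K ρ H n ∧ ∀ Y ∈ K ρ H n, wip ρ (L - P) Y = 0

lemma wip_eq (ρ X Y : Matrix (Fin d) (Fin d) ℂ) :
    wip ρ X Y = ((Rop ρ X * Y).trace).re := by
  unfold wip Rop
  have h : (ρ * (X * Y + Y * X)).trace = ((ρ * X) * Y).trace + (X * (ρ * Y)).trace := by
    rw [mul_add, Matrix.trace_add, Matrix.trace_mul_comm X (ρ * Y), ← Matrix.mul_assoc,
      ← Matrix.mul_assoc]
  rw [h, Matrix.smul_mul, Matrix.trace_smul, add_mul, Matrix.trace_add, Matrix.mul_assoc X ρ Y]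
  simp [Complex.div_re]
  ring

lemma Rop_trace_comm (ρ X Y : Matrix (Fin d) (Fin d) ℂ) :
    ((Rop ρ X) * Y).trace = (X * Rop ρ Y).trace := by
  unfold Rop
  rw [Matrix.smul_mul, Matrix.mul_smul, Matrix.trace_smul, Matrix.trace_smul]
  congr 1
  rw [add_mul, mul_add, Matrix.trace_add, Matrix.trace_add, Matrix.mul_assoc ρ X Y,
    Matrix.trace_mul_comm ρ (X * Y), Matrix.mul_assoc X ρ Y, Matrix.mul_assoc X Y ρ, add_comm]


lemma trace_iter (ρ H : Matrix (Fin d) (Fin d) ℂ) : ∀ a b : ℕ,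
    (((Rop ρ)^[a] (comm ρ H)) * ((Rop ρ)^[b] (comm ρ H))).trace
      = ((comm ρ H) * ((Rop ρ)^[a + b] (comm ρ H))).trace := by
  intro a
  induction a with
  | zero => intro b; simp
  | succ a ih =>
    intro b
    rw [Function.iterate_succ_apply', Rop_trace_comm]
    rw [show Rop ρ ((Rop ρ)^[b] (comm ρ H)) = (Rop ρ)^[b+1] (comm ρ H) from
      (Function.iterate_succ_apply' _ _ _).symm, ih (b+1)]
    ring_nf

lemma wip_add_right (ρ X Y Z : Matrix (Fin d) (Fin d) ℂ) :
    wip ρ X (Y + Z) = wip ρ X Y + wip ρ X Z := by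
  simp [wip_eq, mul_add, Matrix.trace_add]

lemma wip_smul_right (ρ X Y : Matrix (Fin d) (Fin d) ℂ) (r : ℝ) :
    wip ρ X (r • Y) = r * wip ρ X Y := by
  rw [wip_eq, wip_eq, Matrix.mul_smul, Matrix.trace_smul]
  simp [Complex.real_smul]

lemma wip_symm (ρ X Y : Matrix (Fin d) (Fin d) ℂ) : wip ρ X Y = wip ρ Y X := by
  unfold wip; rw [add_comm (X*Y)]

lemma wip_sum_right (ρ X : Matrix (Fin d) (Fin d) ℂ) {ι : Type*} (s : Finset ι)
    (f : ι → Matrix (Fin d) (Fin d) ℂ) :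
    wip ρ X (∑ i ∈ s, f i) = ∑ i ∈ s, wip ρ X (f i) := by
  classical
  induction s using Finset.cons_induction with
  | empty => simp [wip_eq]
  | cons i s hi ih => rw [Finset.sum_cons, wip_add_right, ih, Finset.sum_cons]

lemma wip_sub_left (ρ X Y Z : Matrix (Fin d) (Fin d) ℂ) :
    wip ρ (X - Y) Z = wip ρ X Z - wip ρ Y Z := by
  rw [wip_symm, wip_symm ρ X, wip_symm ρ Y]
  have : X - Y = X + (-1 : ℝ) • Y := by simp [sub_eq_add_neg]
  rw [this, wip_add_right, wip_smul_right]; ring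


lemma vecMulVec_conjT (u w : Fin d → ℂ) :
    (vecMulVec u w)ᴴ = vecMulVec (star w) (star u) := by
  ext i j
  simp [vecMulVec_apply, Matrix.conjTranspose_apply, mul_comm]

lemma rho_herm {ρ : Matrix (Fin d) (Fin d) ℂ} {p : Fin d → ℝ} {v : Fin d → (Fin d → ℂ)}
    (hρ : ρ = ∑ k, (p k : ℂ) • vecMulVec (v k) (star (v k))) : ρ.IsHermitian := by
  rw [hρ]
  unfold Matrix.IsHermitian
  rw [Matrix.conjTranspose_sum]
  congr 1; ext k
  rw [Matrix.conjTranspose_smul, vecMulVec_conjT]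
  simp

lemma comm_herm {ρ H : Matrix (Fin d) (Fin d) ℂ} (hρ : ρ.IsHermitian) (hH : H.IsHermitian) :
    (comm ρ H).IsHermitian := by
  unfold comm Matrix.IsHermitian
  rw [Matrix.conjTranspose_smul, Matrix.conjTranspose_sub, Matrix.conjTranspose_mul,
    Matrix.conjTranspose_mul, hρ.eq, hH.eq]
  simp [smul_sub, sub_eq_add_neg, add_comm]

lemma Rop_herm {ρ X : Matrix (Fin d) (Fin d) ℂ} (hρ : ρ.IsHermitian) (hX : X.IsHermitian) :
    (Rop ρ X).IsHermitian := by
  unfold Rop Matrix.IsHermitian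
  rw [Matrix.conjTranspose_smul, Matrix.conjTranspose_add, Matrix.conjTranspose_mul,
    Matrix.conjTranspose_mul, hρ.eq, hX.eq]
  norm_num [add_comm]

lemma iter_herm {ρ H : Matrix (Fin d) (Fin d) ℂ} (hρ : ρ.IsHermitian) (hH : H.IsHermitian)
    (k : ℕ) : ((Rop ρ)^[k] (comm ρ H)).IsHermitian := by
  induction k with
  | zero => exact comm_herm hρ hH
  | succ k ih => rw [Function.iterate_succ_apply']; exact Rop_herm hρ ih

lemma trace_vecMulVec_mul (u w : Fin d → ℂ) (M : Matrix (Fin d) (Fin d) ℂ) :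
    (vecMulVec u w * M).trace = w ⬝ᵥ M.mulVec u := by
  simp [Matrix.trace, Matrix.diag, Matrix.mul_apply, vecMulVec_apply, dotProduct,
    Matrix.mulVec, Finset.mul_sum]
  rw [Finset.sum_comm]
  congr 1; ext j; congr 1; ext i; ring


lemma dot_herm {X : Matrix (Fin d) (Fin d) ℂ} (hX : X.IsHermitian) (u w : Fin d → ℂ) :
    star u ⬝ᵥ X.mulVec w = star (X.mulVec u) ⬝ᵥ w := by
  rw [Matrix.dotProduct_mulVec, Matrix.star_mulVec, hX.eq]

lemma dot_self_normSq (q : Fin d → ℂ) :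
    star q ⬝ᵥ q = ((∑ i, Complex.normSq (q i) : ℝ) : ℂ) := by
  simp [dotProduct, Complex.normSq_eq_conj_mul_self]

lemma wip_self {ρ : Matrix (Fin d) (Fin d) ℂ} {p : Fin d → ℝ} {v : Fin d → (Fin d → ℂ)}
    (hρ : ρ = ∑ k, (p k : ℂ) • vecMulVec (v k) (star (v k)))
    (X : Matrix (Fin d) (Fin d) ℂ) (hX : X.IsHermitian) :
    wip ρ X X = ∑ k, p k * (∑ i, Complex.normSq (X.mulVec (v k) i)) := by
  have h1 : wip ρ X X = ((ρ * (X * X)).trace).re := by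
    unfold wip
    rw [mul_add, Matrix.trace_add]
    rw [show ((ρ * (X * X)).trace + (ρ * (X * X)).trace) / 2 = (ρ * (X * X)).trace by ring]
  rw [h1, hρ, Finset.sum_mul, Matrix.trace_sum]
  rw [show (∑ k, ((p k : ℂ) • vecMulVec (v k) (star (v k)) * (X * X)).trace)
      = ∑ k, (((p k : ℝ) * (∑ i, Complex.normSq (X.mulVec (v k) i)) : ℝ) : ℂ) by
    apply Finset.sum_congr rfl; intro k _
    rw [Matrix.smul_mul, Matrix.trace_smul, trace_vecMulVec_mul, ← Matrix.mulVec_mulVec,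
      dot_herm hX, dot_self_normSq]
    push_cast
    rw [smul_eq_mul]]
  rw [← Complex.ofReal_sum]
  exact Complex.ofReal_re _


lemma mul_vecMulVec (X : Matrix (Fin d) (Fin d) ℂ) (u w : Fin d → ℂ) :
    X * vecMulVec u w = vecMulVec (X.mulVec u) w := by
  ext i j
  simp [Matrix.mul_apply, vecMulVec_apply, Matrix.mulVec, dotProduct, Finset.sum_mul, mul_assoc]

lemma eq_zero_of_trace_self {X : Matrix (Fin d) (Fin d) ℂ} (hX : X.IsHermitian)
    (h : (X * X).trace = 0) : X = 0 := by
  have h2 : (Xᴴ * X).trace = 0 := by rw [hX.eq]; exact h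
  have h3 : (Xᴴ * X).trace = ((∑ j, ∑ i, Complex.normSq (X i j) : ℝ) : ℂ) := by
    push_cast
    simp [Matrix.trace, Matrix.diag, Matrix.mul_apply, Matrix.conjTranspose_apply,
      Complex.normSq_eq_conj_mul_self]
  rw [h3] at h2
  have h4 : (∑ j, ∑ i, Complex.normSq (X i j) : ℝ) = 0 := by exact_mod_cast h2
  ext i j
  have h5 : ∀ j ∈ Finset.univ, (0:ℝ) ≤ ∑ i, Complex.normSq (X i j) :=
    fun j _ => Finset.sum_nonneg (fun i _ => Complex.normSq_nonneg _)
  have h6 := (Finset.sum_eq_zero_iff_of_nonneg h5).mp h4 j (Finset.mem_univ j)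
  have h7 := (Finset.sum_eq_zero_iff_of_nonneg
    (fun i _ => Complex.normSq_nonneg (X i j))).mp h6 i (Finset.mem_univ i)
  simpa using Complex.normSq_eq_zero.mp h7


lemma herm_sum_smul {n : ℕ} (x : Fin n → ℝ) (M : Fin n → Matrix (Fin d) (Fin d) ℂ)
    (h : ∀ i, (M i).IsHermitian) : (∑ i, x i • M i).IsHermitian := by
  unfold Matrix.IsHermitian
  rw [Matrix.conjTranspose_sum]
  apply Finset.sum_congr rfl
  intro i _
  rw [Matrix.conjTranspose_smul, (h i).eq, star_trivial]

lemma key_zero {ρ H : Matrix (Fin d) (Fin d) ℂ} {p : Fin d → ℝ} {v : Fin d → (Fin d → ℂ)}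
    (hρ : ρ = ∑ k, (p k : ℂ) • vecMulVec (v k) (star (v k)))
    (hppos : ∀ k, 0 ≤ p k)
    {X : Matrix (Fin d) (Fin d) ℂ} (hX : X.IsHermitian) (h0 : wip ρ X X = 0) :
    ∀ j, (X * (Rop ρ)^[j] (comm ρ H)).trace = 0 := by
  have hq : ∀ k, p k ≠ 0 → X.mulVec (v k) = 0 := by
    intro k hk
    rw [wip_self hρ X hX] at h0
    have hnn : ∀ k ∈ Finset.univ, (0:ℝ) ≤ p k * (∑ i, Complex.normSq (X.mulVec (v k) i)) :=
      fun k _ => mul_nonneg (hppos k) (Finset.sum_nonneg fun i _ => Complex.normSq_nonneg _)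
    have h1 := (Finset.sum_eq_zero_iff_of_nonneg hnn).mp h0 k (Finset.mem_univ k)
    have h2 : (∑ i, Complex.normSq (X.mulVec (v k) i)) = 0 := by
      rcases mul_eq_zero.mp h1 with h | h
      · exact absurd h hk
      · exact h
    funext i
    have := (Finset.sum_eq_zero_iff_of_nonneg
      (fun i _ => Complex.normSq_nonneg (X.mulVec (v k) i))).mp h2 i (Finset.mem_univ i)
    exact Complex.normSq_eq_zero.mp this
  have hXρ : X * ρ = 0 := by
    rw [hρ, Finset.mul_sum]
    apply Finset.sum_eq_zero
    intro k _
    rw [Matrix.mul_smul, mul_vecMulVec]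
    by_cases hk : p k = 0
    · simp [hk]
    · rw [hq k hk]
      have : vecMulVec (0 : Fin d → ℂ) (star (v k)) = 0 := by
        ext i j; simp [vecMulVec_apply]
      rw [this, smul_zero]
  have hρX : ρ * X = 0 := by
    have h3 : ρ * X = (X * ρ)ᴴ := by
      rw [Matrix.conjTranspose_mul, hX.eq, (rho_herm hρ).eq]
    rw [h3, hXρ, Matrix.conjTranspose_zero]
  have hRX : Rop ρ X = 0 := by
    unfold Rop; rw [hρX, hXρ]; simp
  intro j
  induction j with
  | zero =>
    simp only [Function.iterate_zero, id_eq]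
    unfold comm
    rw [Matrix.mul_smul, Matrix.trace_smul, mul_sub, Matrix.trace_sub,
      ← Matrix.mul_assoc, hXρ, Matrix.zero_mul,
      Matrix.trace_mul_comm X (H * ρ), Matrix.mul_assoc, hρX, Matrix.mul_zero]
    simp
  | succ j _ =>
    rw [Function.iterate_succ_apply', ← Rop_trace_comm, hRX, Matrix.zero_mul,
      Matrix.trace_zero]


lemma wip_sum_smul_left (ρ : Matrix (Fin d) (Fin d) ℂ) {n : ℕ} (x : Fin n → ℝ)
    (M : Fin n → Matrix (Fin d) (Fin d) ℂ) (Y : Matrix (Fin d) (Fin d) ℂ) :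
    wip ρ (∑ i, x i • M i) Y = ∑ i, x i * wip ρ (M i) Y := by
  rw [wip_symm, wip_sum_right]
  apply Finset.sum_congr rfl
  intro i _
  rw [wip_smul_right, wip_symm]

lemma gram (ρ H : Matrix (Fin d) (Fin d) ℂ) (i j : ℕ) :
    wip ρ ((Rop ρ)^[i] (comm ρ H)) ((Rop ρ)^[j] (comm ρ H)) = Tk ρ H (i + j + 1) := by
  rw [wip_eq, show Rop ρ ((Rop ρ)^[i] (comm ρ H)) = (Rop ρ)^[i+1] (comm ρ H) from
    (Function.iterate_succ_apply' _ _ _).symm, trace_iter, show i + 1 + j = i + j + 1 by omega]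
  rfl

lemma bform (ρ H L : Matrix (Fin d) (Fin d) ℂ) (hL : Rop ρ L = comm ρ H) (j : ℕ) :
    wip ρ L ((Rop ρ)^[j] (comm ρ H)) = Tk ρ H j := by
  rw [wip_eq, hL]; rfl

/-- If the Krylov vectors are linearly independent, the Gram matrix A with entries
T_{i+j-1} is positive definite and the Krylov bound has closed form B_n = bᵀA⁻¹b. -/
theorem stmt8 {d : ℕ} (ρ : Matrix (Fin d) (Fin d) ℂ) (p : Fin d → ℝ) (v : Fin d → (Fin d → ℂ))
    (hρ : ρ = ∑ k, (p k : ℂ) • vecMulVec (v k) (star (v k)))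
    (horth : ∀ k l, star (v k) ⬝ᵥ v l = (if k = l then 1 else 0))
    (hppos : ∀ k, 0 ≤ p k) (hptr : ∑ k, p k = 1) (H : Matrix (Fin d) (Fin d) ℂ) (hH : H.IsHermitian)
    (L : Matrix (Fin d) (Fin d) ℂ) (hLX : memX p v L) (hL : Rop ρ L = comm ρ H)
    (n : ℕ)
    (hind : LinearIndependent ℝ (fun k : Fin n => (Rop ρ)^[(k : ℕ)] (comm ρ H))) :
    (Matrix.of fun i j : Fin n => Tk ρ H ((i : ℕ) + (j : ℕ) + 1)).PosDef ∧
    (∀ P, IsProj ρ H n L P →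
      wip ρ P P =
        (fun i : Fin n => Tk ρ H (i : ℕ)) ⬝ᵥ
          ((Matrix.of fun i j : Fin n => Tk ρ H ((i : ℕ) + (j : ℕ) + 1))⁻¹).mulVec
            (fun i : Fin n => Tk ρ H (i : ℕ))) := by
  classical
  have hvherm : ∀ k : ℕ, ((Rop ρ)^[k] (comm ρ H)).IsHermitian :=
    fun k => iter_herm (rho_herm hρ) hH k
  set A : Matrix (Fin n) (Fin n) ℝ :=
    Matrix.of fun i j : Fin n => Tk ρ H ((i : ℕ) + (j : ℕ) + 1) with hA
  set b : Fin n → ℝ := fun i : Fin n => Tk ρ H (i : ℕ) with hb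
  set vk : ℕ → Matrix (Fin d) (Fin d) ℂ := fun k => (Rop ρ)^[k] (comm ρ H) with hvk
  have hexp : ∀ (x : Fin n → ℝ) (Y : Matrix (Fin d) (Fin d) ℂ),
      wip ρ (∑ i, x i • vk (i : ℕ)) Y = ∑ i, x i * wip ρ (vk (i : ℕ)) Y :=
    fun x Y => wip_sum_smul_left ρ x _ Y
  have hright : ∀ (x : Fin n → ℝ) (Y : Matrix (Fin d) (Fin d) ℂ),
      wip ρ Y (∑ i, x i • vk (i : ℕ)) = ∑ i, x i * wip ρ Y (vk (i : ℕ)) := by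
    intro x Y
    rw [wip_sum_right]
    exact Finset.sum_congr rfl fun i _ => wip_smul_right ρ Y _ (x i)
  have hquad : ∀ x : Fin n → ℝ,
      wip ρ (∑ i, x i • vk (i : ℕ)) (∑ i, x i • vk (i : ℕ)) = x ⬝ᵥ A.mulVec x := by
    intro x
    rw [hexp]
    simp only [dotProduct, Matrix.mulVec, hA, Matrix.of_apply]
    apply Finset.sum_congr rfl
    intro i _
    rw [hright]
    rw [Finset.mul_sum, Finset.mul_sum]
    apply Finset.sum_congr rfl
    intro j _
    rw [gram]
    ring
  have hApos : A.PosDef := by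
    constructor
    · ext i j
      simp only [hA, Matrix.conjTranspose_apply, Matrix.of_apply, star_trivial]
      congr 1
      omega
    · intro x hx
      have hXh : (∑ i, x i • vk (i : ℕ)).IsHermitian :=
        herm_sum_smul x _ (fun i => hvherm _)
      have hnn : 0 ≤ wip ρ (∑ i, x i • vk (i : ℕ)) (∑ i, x i • vk (i : ℕ)) := by
        rw [wip_self hρ _ hXh]
        exact Finset.sum_nonneg fun k _ => mul_nonneg (hppos k)
          (Finset.sum_nonneg fun i _ => Complex.normSq_nonneg _)
      have hne : wip ρ (∑ i, x i • vk (i : ℕ)) (∑ i, x i • vk (i : ℕ)) ≠ 0 := by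
        intro h0
        have htr := key_zero (H := H) hρ hppos hXh h0
        have htrXX : ((∑ i, x i • vk (i : ℕ)) * (∑ i, x i • vk (i : ℕ))).trace = 0 := by
          rw [Finset.mul_sum, Matrix.trace_sum]
          apply Finset.sum_eq_zero
          intro j _
          rw [Matrix.mul_smul, Matrix.trace_smul, htr (j : ℕ), smul_zero]
        have hX0 := eq_zero_of_trace_self hXh htrXX
        exact hx (Finsupp.ext (Fintype.linearIndependent_iff.mp hind x hX0))
      have hpos := lt_of_le_of_ne hnn (Ne.symm hne)
      rw [hquad x] at hpos
      convert hpos using 1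
      simp only [dotProduct, Matrix.mulVec]
      rw [Finsupp.sum_fintype _ _ (fun i => by simp)]
      refine Finset.sum_congr rfl fun i _ => ?_
      rw [Finsupp.sum_fintype _ _ (fun j => by simp), Finset.mul_sum]
      refine Finset.sum_congr rfl fun j _ => ?_
      simp only [star_trivial]
      ring
  refine ⟨hApos, ?_⟩
  rintro P ⟨hPmem, hPorth⟩
  have hset : ((fun k => (Rop ρ)^[k] (comm ρ H)) '' (Set.Iio n))
      = Set.range (fun k : Fin n => vk (k : ℕ)) := by
    ext y
    constructor
    · rintro ⟨k, hk, rfl⟩; exact ⟨⟨k, hk⟩, rfl⟩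
    · rintro ⟨k, rfl⟩; exact ⟨(k : ℕ), k.isLt, rfl⟩
  have hPmem' : P ∈ Submodule.span ℝ (Set.range fun k : Fin n => vk (k : ℕ)) := by
    rw [← hset]; exact hPmem
  obtain ⟨cv, hcv⟩ := (Submodule.mem_span_range_iff_exists_fun ℝ).mp hPmem'
  have hvmem : ∀ j : Fin n, vk (j : ℕ) ∈ K ρ H n :=
    fun j => Submodule.subset_span ⟨(j : ℕ), j.isLt, rfl⟩
  have hLP : ∀ j : Fin n, wip ρ L (vk (j : ℕ)) = wip ρ P (vk (j : ℕ)) := by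
    intro j
    have h := hPorth _ (hvmem j)
    rw [wip_sub_left] at h
    linarith
  have hPvk : ∀ j : Fin n, wip ρ P (vk (j : ℕ)) = b j := by
    intro j
    rw [← hLP j, bform ρ H L hL]
  have hAc : A.mulVec cv = b := by
    funext j
    have e1 : A.mulVec cv j = ∑ i, cv i * Tk ρ H ((j : ℕ) + (i : ℕ) + 1) := by
      simp only [Matrix.mulVec, dotProduct, hA, Matrix.of_apply]
      exact Finset.sum_congr rfl fun i _ => mul_comm _ _
    have e2 : wip ρ P (vk (j : ℕ)) = ∑ i, cv i * Tk ρ H ((j : ℕ) + (i : ℕ) + 1) := by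
      rw [wip_symm, ← hcv, hright]
      apply Finset.sum_congr rfl
      intro i _
      rw [gram]
    rw [e1, ← e2, hPvk j]
  have hdet : IsUnit A.det := isUnit_iff_ne_zero.mpr (ne_of_gt hApos.det_pos)
  have hrhs : b ⬝ᵥ A⁻¹.mulVec b = b ⬝ᵥ cv := by
    rw [← hAc, Matrix.mulVec_mulVec, Matrix.nonsing_inv_mul A hdet, Matrix.one_mulVec]
  have hlhs : wip ρ P P = cv ⬝ᵥ b := by
    have : wip ρ P P = ∑ i, cv i * wip ρ (vk (i : ℕ)) P := by
      conv_lhs => rw [← hcv]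
      rw [hexp]
      simp only [hcv]
    rw [this]
    apply Finset.sum_congr rfl
    intro i _
    rw [wip_symm, hPvk i]
  rw [hlhs, show ((fun i : Fin n => Tk ρ H (i : ℕ)) ⬝ᵥ
      ((Matrix.of fun i j : Fin n => Tk ρ H ((i : ℕ) + (j : ℕ) + 1))⁻¹).mulVec
        (fun i : Fin n => Tk ρ H (i : ℕ))) = b ⬝ᵥ A⁻¹.mulVec b from rfl, hrhs,
    dotProduct_comm]


end KST
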